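/- In Setting (B), for all j, k with 2 ≤ j < k ≤ J−1, Cov(A_j, A_k) = τ²·(J−1)/((J−j)(k−1)). -/

import Mathlib

open MeasureTheory ProbabilityTheory Finset
open scoped ENNReal

lemma integrable_mul_of_memL2 {Ω : Type*} {mΩ : MeasurableSpace Ω} {μ : Measure Ω}
    {f g : Ω → ℝ} (hf : MemLp f 2 μ) (hg : MemLp g 2 μ) :
    Integrable (fun ω => f ω * g ω) μ := by
  have h12 : (1 : ℝ≥0∞) / 1 = 1 / 2 + 1 / 2 := by
    rw [ENNReal.div_add_div_same, div_one]
    norm_num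
    exact (ENNReal.div_self two_ne_zero ENNReal.ofNat_ne_top).symm
  have h := memLp_one_iff_integrable.mp (hf.smul (φ := g) hg (r := 1))
  have h2 : (fun ω => f ω * g ω) = g • f := by
    funext ω; simp [mul_comm]
  rw [h2]; exact h

/-- The covariance of two real random variables (with respect to the ambient
probability measure of a `MeasureSpace`). -/
noncomputable def covar {Ω : Type*} [MeasureSpace Ω] (f g : Ω → ℝ) : ℝ :=
  ∫ ω, (f ω - ∫ x, f x) * (g ω - ∫ x, g x)

/-- **Covariance of the within-period contrasts `A_j`, `A_k` (`j < k`) in Setting (B).** -/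
theorem stmt_8
    {Ω : Type*} [MeasureSpace Ω] [IsProbabilityMeasure (ℙ : Measure Ω)]
    (J : ℕ) (hJ : 3 ≤ J)
    (μc β τsq : ℝ) (θ : ℕ → ℝ) (σsq : ℕ → ℕ → ℝ)
    (α : ℕ → Ω → ℝ) (ε : ℕ → ℕ → Ω → ℝ)
    (hmα : ∀ i, Measurable (α i)) (hmε : ∀ i j, Measurable (ε i j))
    -- the random variables {α_i} ∪ {ε_{i,j}} are mutually independent
    (hindep : iIndepFun (m := fun _ => (inferInstance : MeasurableSpace ℝ))
      (fun x : {x : ℕ ⊕ ℕ × ℕ // (∀ i, x = Sum.inl i → i ∈ Icc 1 (J - 1)) ∧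
          (∀ i j, x = Sum.inr (i, j) → i ∈ Icc 1 (J - 1) ∧ j ∈ Icc 1 J)} =>
        Sum.elim α (fun q => ε q.1 q.2) x.1) ℙ)
    -- moment assumptions
    (hEα : ∀ i ∈ Icc 1 (J - 1), ∫ ω, α i ω ∂ℙ = 0)
    (hVα : ∀ i ∈ Icc 1 (J - 1), variance (α i) ℙ = τsq)
    (hL2α : ∀ i ∈ Icc 1 (J - 1), MemLp (α i) 2 ℙ)
    (hEε : ∀ i ∈ Icc 1 (J - 1), ∀ j ∈ Icc 1 J, ∫ ω, ε i j ω ∂ℙ = 0)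
    (hVε : ∀ i ∈ Icc 1 (J - 1), ∀ j ∈ Icc 1 J, variance (ε i j) ℙ = σsq i j)
    (hL2ε : ∀ i ∈ Icc 1 (J - 1), ∀ j ∈ Icc 1 J, MemLp (ε i j) 2 ℙ)
    -- the mixed effects model: cluster i is on intervention in periods j > i
    (Y : ℕ → ℕ → Ω → ℝ)
    (hY : ∀ i j ω, Y i j ω = μc + α i ω + θ j + (if i < j then β else 0) + ε i j ω)
    -- the within-period contrast A_j
    (A : ℕ → Ω → ℝ)
    (hA : ∀ j ω, A j ω = ((j : ℝ) - 1)⁻¹ * ∑ i ∈ Icc 1 (j - 1), Y i j ω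
        - ((J : ℝ) - (j : ℝ))⁻¹ * ∑ i ∈ Icc j (J - 1), Y i j ω)
    (j k : ℕ) (hj : j ∈ Icc 2 (J - 1)) (hk : k ∈ Icc 2 (J - 1)) (hjk : j < k) :
    covar (A j) (A k)
      = τsq * ((J : ℝ) - 1) / (((J : ℝ) - (j : ℝ)) * ((k : ℝ) - 1)) := by
  -- basic numeric facts
  rw [mem_Icc] at hj hk
  obtain ⟨hj2, hjJ⟩ := hj
  obtain ⟨hk2, hkJ⟩ := hk
  have hjJ' : j ∈ Icc 1 J := by rw [mem_Icc]; omega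
  have hkJ' : k ∈ Icc 1 J := by rw [mem_Icc]; omega
  -- notation
  set S : Finset ℕ := Icc 1 (J - 1) with hS
  set w : ℕ → ℕ → ℝ := fun l i => if i < l then ((l : ℝ) - 1)⁻¹ else -(((J : ℝ) - l)⁻¹) with hw
  set Z : ℕ → ℕ → Ω → ℝ := fun l i ω => α i ω + ε i l ω with hZ
  set T : ℕ → Ω → ℝ := fun l ω => ∑ i ∈ S, w l i * Z l i ω with hT
  -- splitting of the index set
  have hsplit : ∀ l, 2 ≤ l → l ≤ J - 1 → ∀ f : ℕ → ℝ,
      ∑ i ∈ Icc 1 (l - 1), f i + ∑ i ∈ Icc l (J - 1), f i = ∑ i ∈ S, f i := by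
    intro l hl2 hlJ f
    have h1 : Icc 1 (l - 1) = Ioc 0 (l - 1) := by rw [← Finset.Icc_add_one_left_eq_Ioc]; rfl
    have h2 : Icc l (J - 1) = Ioc (l - 1) (J - 1) := by
      rw [← Finset.Icc_add_one_left_eq_Ioc]; congr 1; omega
    have h3 : S = Ioc 0 (J - 1) := by rw [hS, ← Finset.Icc_add_one_left_eq_Ioc]; rfl
    rw [h1, h2, h3]
    exact Finset.sum_Ioc_consecutive f (by omega) (by omega)
  -- T as the centered fluctuation of A
  have hTsum : ∀ l, 2 ≤ l → l ≤ J - 1 → ∀ ω, T l ω =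
      ((l : ℝ) - 1)⁻¹ * ∑ i ∈ Icc 1 (l - 1), Z l i ω
        - ((J : ℝ) - (l : ℝ))⁻¹ * ∑ i ∈ Icc l (J - 1), Z l i ω := by
    intro l hl2 hlJ ω
    rw [hT]
    simp only
    rw [← hsplit l hl2 hlJ (fun i => w l i * Z l i ω)]
    rw [mul_sum, mul_sum]
    rw [sub_eq_add_neg, ← Finset.sum_neg_distrib]
    congr 1
    · refine Finset.sum_congr rfl fun i hi => ?_
      rw [mem_Icc] at hi
      rw [hw]; simp only [if_pos (by omega : i < l)]
    · refine Finset.sum_congr rfl fun i hi => ?_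
      rw [mem_Icc] at hi
      rw [hw]; simp only [if_neg (by omega : ¬ i < l)]
      ring
  have hAeq : ∀ l, 2 ≤ l → l ≤ J - 1 → A l = fun ω =>
      (((l : ℝ) - 1)⁻¹ * ∑ i ∈ Icc 1 (l - 1), (μc + θ l + if i < l then β else 0)
        - ((J : ℝ) - (l : ℝ))⁻¹ * ∑ i ∈ Icc l (J - 1), (μc + θ l + if i < l then β else 0))
        + T l ω := by
    intro l hl2 hlJ
    funext ω
    rw [hA, hTsum l hl2 hlJ ω]
    have e1 : ∀ (s : Finset ℕ), ∑ i ∈ s, Y i l ω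
        = ∑ i ∈ s, (μc + θ l + if i < l then β else 0) + ∑ i ∈ s, Z l i ω := by
      intro s
      rw [← Finset.sum_add_distrib]
      refine Finset.sum_congr rfl fun i hi => ?_
      rw [hY, hZ]; simp only; ring
    rw [e1, e1]
    ring
  -- integrability and expectation facts
  have intα : ∀ i ∈ S, Integrable (α i) ℙ := fun i hi => (hL2α i hi).integrable one_le_two
  have intε : ∀ i ∈ S, ∀ l ∈ Icc 1 J, Integrable (ε i l) ℙ :=
    fun i hi l hl => (hL2ε i hi l hl).integrable one_le_two
  have hL2Z : ∀ l ∈ Icc 1 J, ∀ i ∈ S, MemLp (Z l i) 2 ℙ :=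
    fun l hl i hi => (hL2α i hi).add (hL2ε i hi l hl)
  have intZ : ∀ l ∈ Icc 1 J, ∀ i ∈ S, Integrable (Z l i) ℙ :=
    fun l hl i hi => (intα i hi).add (intε i hi l hl)
  have hEZ : ∀ l ∈ Icc 1 J, ∀ i ∈ S, ∫ ω, Z l i ω = 0 := by
    intro l hl i hi
    rw [hZ]; simp only
    rw [integral_add (intα i hi) (intε i hi l hl), hEα i hi, hEε i hi l hl]; ring
  have intT : ∀ l ∈ Icc 1 J, Integrable (T l) ℙ := by
    intro l hl
    rw [hT]
    apply integrable_finset_sum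
    intro i hi
    exact (intZ l hl i hi).const_mul _
  have hET : ∀ l ∈ Icc 1 J, ∫ ω, T l ω = 0 := by
    intro l hl
    rw [hT]; simp only
    rw [integral_finset_sum _ (fun i hi => (intZ l hl i hi).const_mul _)]
    refine Finset.sum_eq_zero fun i hi => ?_
    rw [integral_const_mul, hEZ l hl i hi, mul_zero]
  -- reduce covariance to the centered fluctuations
  obtain ⟨mj, hAj⟩ : ∃ m : ℝ, A j = fun ω => m + T j ω := ⟨_, hAeq j hj2 hjJ⟩
  obtain ⟨mk, hAk⟩ : ∃ m : ℝ, A k = fun ω => m + T k ω := ⟨_, hAeq k hk2 hkJ⟩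
  have ej : ∫ x, (mj + T j x) = mj := by
    rw [integral_add (integrable_const mj) (intT j hjJ'), hET j hjJ', integral_const]
    simp
  have ek : ∫ x, (mk + T k x) = mk := by
    rw [integral_add (integrable_const mk) (intT k hkJ'), hET k hkJ', integral_const]
    simp
  have hcv : covar (A j) (A k) = ∫ ω, T j ω * T k ω := by
    unfold covar
    rw [hAj, hAk]
    simp only
    rw [ej, ek]
    simp_rw [add_sub_cancel_left]
  -- expand the product of sums
  have hintZZ : ∀ i ∈ S, ∀ m ∈ S, Integrable (fun ω => Z j i ω * Z k m ω) ℙ :=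
    fun i hi m hm => integrable_mul_of_memL2 (hL2Z j hjJ' i hi) (hL2Z k hkJ' m hm)
  have hTT : ∫ ω, T j ω * T k ω
      = ∑ i ∈ S, ∑ m ∈ S, (w j i * w k m) * ∫ ω, Z j i ω * Z k m ω := by
    have hpt : ∀ ω, T j ω * T k ω
        = ∑ i ∈ S, ∑ m ∈ S, (w j i * w k m) * (Z j i ω * Z k m ω) := by
      intro ω
      rw [hT]; simp only
      rw [Finset.sum_mul_sum]
      exact Finset.sum_congr rfl fun i _ => Finset.sum_congr rfl fun m _ => by ring
    simp_rw [hpt]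
    rw [integral_finset_sum _ (fun i hi =>
      integrable_finset_sum _ (fun m hm => (hintZZ i hi m hm).const_mul _))]
    refine Finset.sum_congr rfl fun i hi => ?_
    rw [integral_finset_sum _ (fun m hm => (hintZZ i hi m hm).const_mul _)]
    exact Finset.sum_congr rfl fun m hm => integral_const_mul _ _
  -- independence consequences
  have indαα : ∀ i ∈ S, ∀ m ∈ S, i ≠ m → IndepFun (α i) (α m) ℙ := by
    intro i hi m hm hne
    exact hindep.indepFun
      (i := ⟨Sum.inl i, fun i' h => by injection h with h'; exact h' ▸ hi,
        fun a b h => by simp at h⟩)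
      (j := ⟨Sum.inl m, fun i' h => by injection h with h'; exact h' ▸ hm,
        fun a b h => by simp at h⟩)
      (by intro hEq; exact hne (by simpa using congrArg Subtype.val hEq))
  have indαε : ∀ i ∈ S, ∀ m ∈ S, ∀ l ∈ Icc 1 J, IndepFun (α i) (ε m l) ℙ := by
    intro i hi m hm l hl
    exact hindep.indepFun
      (i := ⟨Sum.inl i, fun i' h => by injection h with h'; exact h' ▸ hi,
        fun a b h => by simp at h⟩)
      (j := ⟨Sum.inr (m, l), fun i' h => by simp at h,
        fun a b h => by
          injection h with h'; injection h' with h1 h2; subst h1; subst h2; exact ⟨hm, hl⟩⟩)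
      (by intro hEq; exact absurd (congrArg Subtype.val hEq) (by simp))
  have indεα : ∀ i ∈ S, ∀ m ∈ S, ∀ l ∈ Icc 1 J, IndepFun (ε i l) (α m) ℙ :=
    fun i hi m hm l hl => (indαε m hm i hi l hl).symm
  have indεε : ∀ i ∈ S, ∀ m ∈ S, ∀ l ∈ Icc 1 J, ∀ l' ∈ Icc 1 J, l ≠ l' →
      IndepFun (ε i l) (ε m l') ℙ := by
    intro i hi m hm l hl l' hl' hne
    exact hindep.indepFun
      (i := ⟨Sum.inr (i, l), fun i' h => by simp at h,
        fun a b h => by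
          injection h with h'; injection h' with h1 h2; subst h1; subst h2; exact ⟨hi, hl⟩⟩)
      (j := ⟨Sum.inr (m, l'), fun i' h => by simp at h,
        fun a b h => by
          injection h with h'; injection h' with h1 h2; subst h1; subst h2; exact ⟨hm, hl'⟩⟩)
      (by
        intro hEq
        have := congrArg Subtype.val hEq
        simp at this
        exact hne this.2)
  have hjk' : j ≠ k := Nat.ne_of_lt hjk
  -- the key second-moment computation
  have hkey : ∀ i ∈ S, ∀ m ∈ S, ∫ ω, Z j i ω * Z k m ω = if i = m then τsq else 0 := by
    intro i hi m hm
    have hexp : ∀ ω, Z j i ω * Z k m ω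
        = α i ω * α m ω + α i ω * ε m k ω + ε i j ω * α m ω + ε i j ω * ε m k ω := by
      intro ω; rw [hZ]; simp only; ring
    have i1 : Integrable (fun ω => α i ω * α m ω) ℙ :=
      integrable_mul_of_memL2 (hL2α i hi) (hL2α m hm)
    have i2 : Integrable (fun ω => α i ω * ε m k ω) ℙ :=
      integrable_mul_of_memL2 (hL2α i hi) (hL2ε m hm k hkJ')
    have i3 : Integrable (fun ω => ε i j ω * α m ω) ℙ :=
      integrable_mul_of_memL2 (hL2ε i hi j hjJ') (hL2α m hm)
    have i4 : Integrable (fun ω => ε i j ω * ε m k ω) ℙ :=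
      integrable_mul_of_memL2 (hL2ε i hi j hjJ') (hL2ε m hm k hkJ')
    have e2 : ∫ ω, α i ω * ε m k ω = 0 := by
      have h := (indαε i hi m hm k hkJ').integral_mul_eq_mul_integral (intα i hi).aestronglyMeasurable
        (intε m hm k hkJ').aestronglyMeasurable
      simpa [Pi.mul_apply, hEα i hi, hEε m hm k hkJ'] using h
    have e3 : ∫ ω, ε i j ω * α m ω = 0 := by
      have h := (indεα i hi m hm j hjJ').integral_mul_eq_mul_integral (intε i hi j hjJ').aestronglyMeasurable
        (intα m hm).aestronglyMeasurable
      simpa [Pi.mul_apply, hEα m hm, hEε i hi j hjJ'] using h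
    have e4 : ∫ ω, ε i j ω * ε m k ω = 0 := by
      have h := (indεε i hi m hm j hjJ' k hkJ' hjk').integral_mul_eq_mul_integral
        (intε i hi j hjJ').aestronglyMeasurable (intε m hm k hkJ').aestronglyMeasurable
      simpa [Pi.mul_apply, hEε i hi j hjJ', hEε m hm k hkJ'] using h
    have e1 : ∫ ω, α i ω * α m ω = if i = m then τsq else 0 := by
      by_cases h : i = m
      · subst h
        rw [if_pos rfl]
        have hv := variance_eq_sub (hL2α i hi)
        rw [hVα i hi, hEα i hi] at hv
        simp at hv
        have hsq : ∀ ω : Ω, α i ω * α i ω = α i ω ^ 2 := fun ω => (pow_two _).symm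
        simp_rw [hsq]
        linarith [hv]
      · simp only [if_neg h]
        have h2 := (indαα i hi m hm h).integral_mul_eq_mul_integral (intα i hi).aestronglyMeasurable (intα m hm).aestronglyMeasurable
        simpa [Pi.mul_apply, hEα i hi, hEα m hm] using h2
    calc ∫ ω, Z j i ω * Z k m ω
        = ∫ ω, (α i ω * α m ω + α i ω * ε m k ω + ε i j ω * α m ω + ε i j ω * ε m k ω) := by
          simp_rw [hexp]
      _ = (∫ ω, α i ω * α m ω) + (∫ ω, α i ω * ε m k ω) + (∫ ω, ε i j ω * α m ω)
            + (∫ ω, ε i j ω * ε m k ω) := by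
          have i12 : Integrable (fun ω => α i ω * α m ω + α i ω * ε m k ω) ℙ := i1.add i2
          have i123 : Integrable
              (fun ω => α i ω * α m ω + α i ω * ε m k ω + ε i j ω * α m ω) ℙ := i12.add i3
          rw [integral_add i123 i4, integral_add i12 i3, integral_add i1 i2]
      _ = if i = m then τsq else 0 := by rw [e1, e2, e3, e4]; ring
  -- collapse the double sum
  have hdiag : ∑ i ∈ S, ∑ m ∈ S, (w j i * w k m) * ∫ ω, Z j i ω * Z k m ω
      = ∑ i ∈ S, (w j i * w k i) * τsq := by
    refine Finset.sum_congr rfl fun i hi => ?_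
    have : ∀ m ∈ S, (w j i * w k m) * ∫ ω, Z j i ω * Z k m ω
        = if i = m then (w j i * w k m) * τsq else 0 := by
      intro m hm
      rw [hkey i hi m hm, mul_ite, mul_zero]
    rw [Finset.sum_congr rfl this, Finset.sum_ite_eq S i (fun m => (w j i * w k m) * τsq),
      if_pos hi]
  -- nonvanishing denominators
  have hjR : (2:ℝ) ≤ (j:ℝ) := by exact_mod_cast hj2
  have hkR : (2:ℝ) ≤ (k:ℝ) := by exact_mod_cast hk2
  have hjJR : (j:ℝ) + 1 ≤ (J:ℝ) := by exact_mod_cast (show j + 1 ≤ J by omega)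
  have hkJR : (k:ℝ) + 1 ≤ (J:ℝ) := by exact_mod_cast (show k + 1 ≤ J by omega)
  have n1 : (j:ℝ) - 1 ≠ 0 := ne_of_gt (by linarith)
  have n2 : (k:ℝ) - 1 ≠ 0 := ne_of_gt (by linarith)
  have n3 : (J:ℝ) - (j:ℝ) ≠ 0 := ne_of_gt (by linarith)
  have n4 : (J:ℝ) - (k:ℝ) ≠ 0 := ne_of_gt (by linarith)
  -- second splitting of the index range
  have hsplit2 : ∀ f : ℕ → ℝ,
      ∑ i ∈ Icc j (k - 1), f i + ∑ i ∈ Icc k (J - 1), f i = ∑ i ∈ Icc j (J - 1), f i := by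
    intro f
    have h1 : Icc j (k - 1) = Ioc (j - 1) (k - 1) := by
      rw [← Finset.Icc_add_one_left_eq_Ioc]; congr 1; omega
    have h2 : Icc k (J - 1) = Ioc (k - 1) (J - 1) := by
      rw [← Finset.Icc_add_one_left_eq_Ioc]; congr 1; omega
    have h3 : Icc j (J - 1) = Ioc (j - 1) (J - 1) := by
      rw [← Finset.Icc_add_one_left_eq_Ioc]; congr 1; omega
    rw [h1, h2, h3]
    exact Finset.sum_Ioc_consecutive f (by omega) (by omega)
  -- the final arithmetic computation
  have harith : ∑ i ∈ S, (w j i * w k i) * τsq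
      = τsq * ((J:ℝ) - 1) / (((J:ℝ) - (j:ℝ)) * ((k:ℝ) - 1)) := by
    rw [← hsplit j hj2 hjJ fun i => (w j i * w k i) * τsq,
      ← hsplit2 fun i => (w j i * w k i) * τsq]
    have e1 : ∀ i ∈ Icc 1 (j - 1), (w j i * w k i) * τsq
        = (((j:ℝ) - 1)⁻¹ * ((k:ℝ) - 1)⁻¹) * τsq := by
      intro i hi; rw [mem_Icc] at hi
      rw [hw]; simp only
      rw [if_pos (show i < j by omega), if_pos (show i < k by omega)]
    have e2 : ∀ i ∈ Icc j (k - 1), (w j i * w k i) * τsq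
        = (-(((J:ℝ) - (j:ℝ))⁻¹) * ((k:ℝ) - 1)⁻¹) * τsq := by
      intro i hi; rw [mem_Icc] at hi
      rw [hw]; simp only
      rw [if_neg (show ¬ i < j by omega), if_pos (show i < k by omega)]
    have e3 : ∀ i ∈ Icc k (J - 1), (w j i * w k i) * τsq
        = (-(((J:ℝ) - (j:ℝ))⁻¹) * -(((J:ℝ) - (k:ℝ))⁻¹)) * τsq := by
      intro i hi; rw [mem_Icc] at hi
      rw [hw]; simp only
      rw [if_neg (show ¬ i < j by omega), if_neg (show ¬ i < k by omega)]
    rw [Finset.sum_congr rfl e1, Finset.sum_congr rfl e2, Finset.sum_congr rfl e3,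
      Finset.sum_const, Finset.sum_const, Finset.sum_const,
      Nat.card_Icc, Nat.card_Icc, Nat.card_Icc,
      nsmul_eq_mul, nsmul_eq_mul, nsmul_eq_mul]
    have c1 : ((j - 1 + 1 - 1 : ℕ) : ℝ) = (j:ℝ) - 1 := by
      have h : j - 1 + 1 - 1 = j - 1 := by omega
      rw [h, Nat.cast_sub (by omega)]; simp
    have c2 : ((k - 1 + 1 - j : ℕ) : ℝ) = (k:ℝ) - (j:ℝ) := by
      have h : k - 1 + 1 - j = k - j := by omega
      rw [h, Nat.cast_sub (by omega)]
    have c3 : ((J - 1 + 1 - k : ℕ) : ℝ) = (J:ℝ) - (k:ℝ) := by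
      have h : J - 1 + 1 - k = J - k := by omega
      rw [h, Nat.cast_sub (by omega)]
    rw [c1, c2, c3]
    field_simp
    ring
  rw [hcv, hTT, hdiag, harith]
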